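/- Let r₀ > 0, let η : [0,∞) → ℝ be continuously differentiable such that η' has compact support, and let β, ψ : (r₀,∞) → ℝ be Lebesgue measurable and nonnegative with ∫_{r₀}^∞ r̃ β(r̃) ψ(r̃) dr̃ < ∞. Then 2 ∫₀^∞ r η(r) ( ∫_r^∞ κ(r, r̃) β(r̃) ψ(r̃) dr̃ ) dr = ∫_{r₀}^∞ r̃ η(r̃) β(r̃) ψ(r̃) dr̃ − ∫_{r₀}^∞ (1/r̃) ( ∫₀^{r̃} r² η'(r) dr ) β(r̃) ψ(r̃) dr̃, and all three integrals are finite. -/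

import Mathlib

open MeasureTheory Set

/-- The fragmentation kernel of assumption (A4):
`κ(r, r̃) = 1/r̃` if `r̃ > r₀` and `0 < r < r̃`, and `0` otherwise. -/
noncomputable def kappa (r₀ r rt : ℝ) : ℝ :=
  if r₀ < rt ∧ 0 < r ∧ r < rt then 1 / rt else 0

/-- The key computation (psi-cal3_ff) in the proof of the conservation-of-mass identity
for the limiting weak solution: for `η` continuously differentiable on `[0,∞)` with `η'`
of compact support, and `β, ψ ≥ 0` with finite first moment of `β ψ`,
`2 ∫₀^∞ r η(r) (∫_r^∞ κ(r,r̃) β ψ dr̃) dr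
  = ∫_{r₀}^∞ r̃ η(r̃) β ψ dr̃ − ∫_{r₀}^∞ (1/r̃)(∫₀^{r̃} r² η'(r) dr) β ψ dr̃`,
and all three integrals are finite. -/
theorem stmt12 (r₀ : ℝ) (hr₀ : 0 < r₀) (η η' β ψ : ℝ → ℝ)
    (hηd : ∀ r ∈ Set.Ici (0 : ℝ), HasDerivWithinAt η (η' r) (Set.Ici 0) r)
    (hη'c : ContinuousOn η' (Set.Ici 0))
    (hη's : HasCompactSupport η')
    (hβm : AEMeasurable β (volume.restrict (Set.Ioi r₀)))
    (hψm : AEMeasurable ψ (volume.restrict (Set.Ioi r₀)))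
    (hβ0 : ∀ r ∈ Set.Ioi r₀, 0 ≤ β r) (hψ0 : ∀ r ∈ Set.Ioi r₀, 0 ≤ ψ r)
    (hint : IntegrableOn (fun rt => rt * (β rt * ψ rt)) (Set.Ioi r₀)) :
    IntegrableOn
        (fun r => r * η r * ∫ rt in Set.Ioi r, kappa r₀ r rt * (β rt * ψ rt))
        (Set.Ioi (0 : ℝ)) ∧
    IntegrableOn (fun rt => rt * η rt * (β rt * ψ rt)) (Set.Ioi r₀) ∧
    IntegrableOn
        (fun rt => (1 / rt) * (∫ r in (0 : ℝ)..rt, r ^ 2 * η' r) * (β rt * ψ rt))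
        (Set.Ioi r₀) ∧
    2 * ∫ r in Set.Ioi (0 : ℝ), r * η r * ∫ rt in Set.Ioi r, kappa r₀ r rt * (β rt * ψ rt)
      = (∫ rt in Set.Ioi r₀, rt * η rt * (β rt * ψ rt))
        - ∫ rt in Set.Ioi r₀, (1 / rt) * (∫ r in (0 : ℝ)..rt, r ^ 2 * η' r) * (β rt * ψ rt) := by
  classical
  -- extended (globally continuous) versions of η and η'
  set ηe : ℝ → ℝ := fun r => η (max r 0) with hηe_def
  set η'e : ℝ → ℝ := fun r => η' (max r 0) with hη'e_def
  have hηc : ContinuousOn η (Ici 0) := fun r hr => (hηd r hr).continuousWithinAt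
  have hmax : Continuous fun r : ℝ => max r 0 := continuous_id.max continuous_const
  have hηe_cont : Continuous ηe := hηc.comp_continuous hmax fun x => mem_Ici.mpr (le_max_right _ _)
  have hη'e_cont : Continuous η'e := hη'c.comp_continuous hmax fun x => mem_Ici.mpr (le_max_right _ _)
  have hηe_eq : ∀ r ∈ Ici (0 : ℝ), ηe r = η r := by
    intro r hr; simp only [hηe_def, max_eq_left (mem_Ici.mp hr)]
  have hη'e_eq : ∀ r ∈ Ici (0 : ℝ), η'e r = η' r := by
    intro r hr; simp only [hη'e_def, max_eq_left (mem_Ici.mp hr)]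
  have hηed : ∀ r ∈ Ici (0 : ℝ), HasDerivWithinAt ηe (η'e r) (Ici 0) r := by
    intro r hr
    rw [hη'e_eq r hr]
    exact (hηd r hr).congr (fun y hy => hηe_eq y hy) (hηe_eq r hr)
  -- support bound
  obtain ⟨R, hR⟩ := hη's.isBounded.subset_closedBall 0
  set R' : ℝ := max R r₀ + 1 with hR'_def
  have hR'0 : 0 < R' := lt_of_lt_of_le hr₀ (by
    have : r₀ ≤ max R r₀ := le_max_right _ _
    linarith)
  have hη'zero : ∀ x : ℝ, R' ≤ x → η' x = 0 := by
    intro x hx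
    apply image_eq_zero_of_notMem_tsupport
    intro hmem
    have := hR hmem
    rw [Real.closedBall_eq_Icc] at this
    have hxR : x ≤ 0 + R := this.2
    have : R ≤ max R r₀ := le_max_left _ _
    linarith
  have hη'e_zero : ∀ x : ℝ, R' ≤ x → η'e x = 0 := by
    intro x hx
    have hx0 : (0 : ℝ) ≤ x := le_trans hR'0.le hx
    rw [hη'e_eq x hx0]; exact hη'zero x hx
  -- η is constant on [R', ∞)
  have hconst : ∀ x : ℝ, R' ≤ x → η x = η R' := by
    intro x hx
    have h1 : ContinuousOn η (Icc R' x) := hηc.mono fun t ht => le_trans hR'0.le ht.1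
    have h2 : ∀ t ∈ Ico R' x, HasDerivWithinAt η 0 (Ici t) t := by
      intro t ht
      have ht0 : (0 : ℝ) ≤ t := le_trans hR'0.le ht.1
      have := (hηd t ht0).mono (Ici_subset_Ici.mpr ht0)
      rwa [hη'zero t ht.1] at this
    exact constant_of_has_deriv_right_zero h1 h2 x ⟨hx, le_refl x⟩
  -- uniform bound on ηe
  obtain ⟨C, hC⟩ : ∃ C : ℝ, ∀ x ∈ Icc (0 : ℝ) R', |ηe x| ≤ C := by
    obtain ⟨x₀, _, hx₀⟩ := isCompact_Icc.exists_isMaxOn ⟨0, by simp [hR'0.le]⟩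
      ((continuous_abs.comp hηe_cont).continuousOn (s := Icc (0:ℝ) R'))
    exact ⟨|ηe x₀|, fun x hx => isMaxOn_iff.mp hx₀ x hx⟩
  have hC0 : 0 ≤ C := le_trans (abs_nonneg _) (hC 0 ⟨le_refl _, hR'0.le⟩)
  have hηe_bdd : ∀ r : ℝ, |ηe r| ≤ C := by
    intro r
    have hm : (0 : ℝ) ≤ max r 0 := le_max_right r 0
    have heval : ηe r = η (max r 0) := rfl
    rcases le_or_gt (max r 0) R' with h | h
    · have := hC (max r 0) ⟨hm, h⟩
      have he : ηe (max r 0) = ηe r := by simp only [hηe_def, max_eq_left hm]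
      rwa [he] at this
    · rw [heval, hconst _ h.le]
      have := hC R' ⟨hR'0.le, le_refl _⟩
      rwa [hηe_eq R' hR'0.le] at this
  -- bound on η'e and the primitive Ψe
  obtain ⟨C₂, hC₂⟩ : ∃ C₂ : ℝ, ∀ x ∈ Icc (0 : ℝ) R', |η'e x| ≤ C₂ := by
    obtain ⟨x₀, _, hx₀⟩ := isCompact_Icc.exists_isMaxOn ⟨0, by simp [hR'0.le]⟩
      ((continuous_abs.comp hη'e_cont).continuousOn (s := Icc (0:ℝ) R'))
    exact ⟨|η'e x₀|, fun x hx => isMaxOn_iff.mp hx₀ x hx⟩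
  have hC₂0 : 0 ≤ C₂ := le_trans (abs_nonneg _) (hC₂ 0 ⟨le_refl _, hR'0.le⟩)
  set Ψe : ℝ → ℝ := fun rt => ∫ r in (0:ℝ)..rt, r ^ 2 * η'e r with hΨe_def
  have hη'e_int : ∀ a b : ℝ, IntervalIntegrable (fun r => r ^ 2 * η'e r) volume a b :=
    fun a b => ((continuous_pow 2).mul hη'e_cont).intervalIntegrable a b
  have hΨe_cont : Continuous Ψe := intervalIntegral.continuous_primitive hη'e_int 0
  set K : ℝ := R' ^ 2 * C₂ * R' with hK_def
  have hK0 : 0 ≤ K := by positivity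
  have hΨe_bdd : ∀ rt : ℝ, 0 ≤ rt → |Ψe rt| ≤ K := by
    have hsub : ∀ rt ∈ Icc (0 : ℝ) R', |Ψe rt| ≤ K := by
      intro rt hrt
      have hb : ∀ x ∈ Set.uIoc (0:ℝ) rt, ‖x ^ 2 * η'e x‖ ≤ R' ^ 2 * C₂ := by
        intro x hx
        rw [uIoc_of_le hrt.1] at hx
        have hx' : x ∈ Icc (0:ℝ) R' := ⟨hx.1.le, le_trans hx.2 hrt.2⟩
        have h1 : |x ^ 2| ≤ R' ^ 2 := by
          rw [abs_of_nonneg (by positivity)]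
          exact pow_le_pow_left₀ hx'.1 hx'.2 2
        calc ‖x ^ 2 * η'e x‖ = |x ^ 2| * |η'e x| := abs_mul _ _
          _ ≤ R' ^ 2 * C₂ := mul_le_mul h1 (hC₂ x hx') (abs_nonneg _) (by positivity)
      have := intervalIntegral.norm_integral_le_of_norm_le_const hb
      calc |Ψe rt| ≤ R' ^ 2 * C₂ * |rt - 0| := this
        _ ≤ R' ^ 2 * C₂ * R' := by
            apply mul_le_mul_of_nonneg_left _ (by positivity)
            rw [sub_zero, abs_of_nonneg hrt.1]; exact hrt.2
    intro rt hrt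
    rcases le_or_gt rt R' with h | h
    · exact hsub rt ⟨hrt, h⟩
    · have hzero : ∫ r in R'..rt, r ^ 2 * η'e r = 0 := by
        rw [intervalIntegral.integral_congr (g := fun _ => (0:ℝ))
          (by
            intro x hx
            rw [uIcc_of_le h.le] at hx
            simp [hη'e_zero x hx.1])]
        simp
      have hadd := intervalIntegral.integral_add_adjacent_intervals
        (hη'e_int 0 R') (hη'e_int R' rt)
      have : Ψe rt = Ψe R' := by
        simp only [hΨe_def]
        rw [← hadd, hzero, add_zero]
      rw [this]
      exact hsub R' ⟨hR'0.le, le_refl _⟩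
  -- measurable nonnegative version of β ψ
  have hβψm : AEMeasurable (fun rt => β rt * ψ rt) (volume.restrict (Ioi r₀)) := hβm.mul hψm
  set g : ℝ → ℝ := fun x => max (hβψm.mk _ x) 0 with hg_def
  have hgm : Measurable g := hβψm.measurable_mk.max measurable_const
  have hg0 : ∀ x, 0 ≤ g x := fun x => le_max_right _ _
  have hβψ0 : ∀ᵐ x ∂volume.restrict (Ioi r₀), 0 ≤ β x * ψ x := by
    filter_upwards [ae_restrict_mem measurableSet_Ioi] with x hx
    exact mul_nonneg (hβ0 x hx) (hψ0 x hx)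
  have hg_ae : (fun x => β x * ψ x) =ᵐ[volume.restrict (Ioi r₀)] g := by
    filter_upwards [hβψm.ae_eq_mk, hβψ0] with x h1 h2
    simp only [hg_def, ← h1]
    exact (max_eq_left h2).symm
  have hgfull : ∀ᵐ x ∂(volume : Measure ℝ), x ∈ Ioi r₀ → β x * ψ x = g x :=
    (ae_restrict_iff' measurableSet_Ioi).mp hg_ae
  have hintg : IntegrableOn (fun rt => rt * g rt) (Ioi r₀) := by
    apply hint.congr
    filter_upwards [hg_ae] with x hx
    rw [hx]
  -- the double-integral setup
  set μ : Measure ℝ := volume.restrict (Ioi (0:ℝ)) with hμ_def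
  set ν : Measure ℝ := volume.restrict (Ioi r₀) with hν_def
  set F : ℝ → ℝ → ℝ := fun r rt => r * ηe r * (kappa r₀ r rt * g rt) with hF_def
  have hκm : Measurable fun q : ℝ × ℝ => kappa r₀ q.1 q.2 := by
    have hs : MeasurableSet {q : ℝ × ℝ | r₀ < q.2 ∧ 0 < q.1 ∧ q.1 < q.2} := by
      apply (measurableSet_lt measurable_const measurable_snd).inter
      exact (measurableSet_lt measurable_const measurable_fst).inter
        (measurableSet_lt measurable_fst measurable_snd)
    have : (fun q : ℝ × ℝ => kappa r₀ q.1 q.2)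
        = {q : ℝ × ℝ | r₀ < q.2 ∧ 0 < q.1 ∧ q.1 < q.2}.indicator (fun q => 1 / q.2) := by
      funext q
      simp only [kappa, indicator, mem_setOf_eq]
    rw [this]
    exact (measurable_const.div measurable_snd).indicator hs
  have hFswm : Measurable fun q : ℝ × ℝ => F q.2 q.1 := by
    apply ((measurable_snd.mul (hηe_cont.measurable.comp measurable_snd)).mul
      (Measurable.mul _ (hgm.comp measurable_fst)))
    exact hκm.comp measurable_swap
  have hFm : Measurable (Function.uncurry F) := by
    apply ((measurable_fst.mul (hηe_cont.measurable.comp measurable_fst)).mul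
      (hκm.mul (hgm.comp measurable_snd)))
  -- kernel rewriting as indicator
  have hker : ∀ rt : ℝ, r₀ < rt →
      (fun r => F r rt) = (Ioo (0:ℝ) rt).indicator
        (fun r => r * ηe r * ((1 / rt) * g rt)) := by
    intro rt hrt
    funext r
    by_cases hr : r ∈ Ioo (0:ℝ) rt
    · rw [indicator_of_mem hr]
      have hk : kappa r₀ r rt = 1 / rt := by unfold kappa; exact if_pos ⟨hrt, hr.1, hr.2⟩
      simp only [hF_def, hk]
    · rw [indicator_of_notMem hr]
      have hno : ¬(r₀ < rt ∧ 0 < r ∧ r < rt) := fun h => hr ⟨h.2.1, h.2.2⟩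
      have hk : kappa r₀ r rt = 0 := by unfold kappa; exact if_neg hno
      simp only [hF_def, hk, zero_mul, mul_zero]
  have hIoosub : ∀ rt : ℝ, Ioo (0:ℝ) rt ⊆ Ioi (0:ℝ) := fun rt x hx => hx.1
  -- integrability of slices
  have hii : ∀ rt ∈ Ioi r₀, Integrable (fun r => F r rt) μ := by
    intro rt hrt
    rw [hker rt hrt, hμ_def, integrable_indicator_iff measurableSet_Ioo]
    have h1 : IntegrableOn (fun r => r * ηe r * ((1 / rt) * g rt)) (Ioo 0 rt) volume :=
      (((continuous_id.mul hηe_cont).mul continuous_const).integrableOn_Icc).mono_set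
        Ioo_subset_Icc_self
    unfold IntegrableOn
    rw [Measure.restrict_restrict measurableSet_Ioo]
    exact h1.mono_set inter_subset_left
  -- inner integral values
  set Φ : ℝ → ℝ := fun rt => ∫ r in (0:ℝ)..rt, r * ηe r with hΦ_def
  have hval : ∀ rt ∈ Ioi r₀, ∫ r, F r rt ∂μ = Φ rt * ((1 / rt) * g rt) := by
    intro rt hrt
    have hrt0 : (0:ℝ) < rt := lt_trans hr₀ hrt
    rw [hker rt hrt, hμ_def, integral_indicator measurableSet_Ioo,
      Measure.restrict_restrict measurableSet_Ioo,
      inter_eq_self_of_subset_left (hIoosub rt),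
      integral_mul_const]
    congr 1
    have h2 : Φ rt = ∫ r in Ioc (0:ℝ) rt, r * ηe r := intervalIntegral.integral_of_le hrt0.le
    rw [h2, integral_Ioc_eq_integral_Ioo]
  -- integrability of the iterated norm integral
  have hiii : Integrable (fun rt => ∫ r, ‖F r rt‖ ∂μ) ν := by
    apply Integrable.mono (hintg.const_mul C)
    · exact ((hFswm.norm).aestronglyMeasurable.integral_prod_right' (μ := ν) (ν := μ))
    · filter_upwards [ae_restrict_mem measurableSet_Ioi] with rt hrt
      have hrt0 : (0:ℝ) < rt := lt_trans hr₀ hrt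
      have hc0 : 0 ≤ (1 / rt) * g rt := mul_nonneg (by positivity) (hg0 rt)
      have heq : (fun r => ‖F r rt‖)
          = (Ioo (0:ℝ) rt).indicator (fun r => ‖r * ηe r * ((1 / rt) * g rt)‖) := by
        funext r
        rw [congrFun (hker rt hrt) r, norm_indicator_eq_indicator_norm]
      have h1 : ∫ r, ‖F r rt‖ ∂μ
          = ∫ r in Ioo (0:ℝ) rt, ‖r * ηe r * ((1 / rt) * g rt)‖ := by
        rw [heq, hμ_def, integral_indicator measurableSet_Ioo,
          Measure.restrict_restrict measurableSet_Ioo,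
          inter_eq_self_of_subset_left (hIoosub rt)]
      have h2 : ∫ r in Ioo (0:ℝ) rt, ‖r * ηe r * ((1 / rt) * g rt)‖
          ≤ ∫ _ in Ioo (0:ℝ) rt, C * rt * ((1 / rt) * g rt) := by
        apply setIntegral_mono_on
        · exact ((((continuous_id.mul hηe_cont).mul continuous_const).norm).integrableOn_Icc).mono_set
            Ioo_subset_Icc_self
        · exact integrableOn_const measure_Ioo_lt_top.ne
        · exact measurableSet_Ioo
        · intro x hx
          have : ‖x * ηe x * ((1 / rt) * g rt)‖ = |x| * |ηe x| * ((1 / rt) * g rt) := by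
            rw [Real.norm_eq_abs, abs_mul, abs_mul, abs_of_nonneg hc0]
          rw [this]
          apply mul_le_mul_of_nonneg_right _ hc0
          have hxle : |x| ≤ rt := by
            rw [abs_of_nonneg hx.1.le]; exact hx.2.le
          calc |x| * |ηe x| ≤ rt * C :=
                mul_le_mul hxle (hηe_bdd x) (abs_nonneg _) hrt0.le
            _ = C * rt := mul_comm _ _
      have h3 : ∫ _ in Ioo (0:ℝ) rt, C * rt * ((1 / rt) * g rt) = C * (rt * g rt) := by
        rw [setIntegral_const, Real.volume_real_Ioo_of_le hrt0.le, sub_zero, smul_eq_mul]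
        field_simp
      have hnn : 0 ≤ ∫ r, ‖F r rt‖ ∂μ := integral_nonneg fun r => norm_nonneg _
      rw [Real.norm_eq_abs, abs_of_nonneg hnn]
      calc ∫ r, ‖F r rt‖ ∂μ ≤ C * (rt * g rt) := by rw [h1]; rw [← h3] at *; exact h2
        _ ≤ ‖C * (rt * g rt)‖ := le_abs_self _
  -- product integrability
  have hprod : Integrable (Function.uncurry fun rt r => F r rt) (ν.prod μ) := by
    apply (integrable_prod_iff (hFswm.aestronglyMeasurable)).mpr
    constructor
    · filter_upwards [ae_restrict_mem measurableSet_Ioi] with rt hrt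
      exact hii rt hrt
    · exact hiii
  have hswap : Integrable (Function.uncurry F) (μ.prod ν) := hprod.swap
  -- identification of the inner integral in the statement
  have hκ_zero_left : ∀ r rt : ℝ, ¬ r < rt → kappa r₀ r rt = 0 := by
    intro r rt h; unfold kappa; exact if_neg fun hc => h hc.2.2
  have hκ_zero_r₀ : ∀ r rt : ℝ, ¬ r₀ < rt → kappa r₀ r rt = 0 := by
    intro r rt h; unfold kappa; exact if_neg fun hc => h hc.1
  have hinner : ∀ r : ℝ, 0 < r →
      (∫ rt in Ioi r, kappa r₀ r rt * (β rt * ψ rt)) = ∫ rt, kappa r₀ r rt * g rt ∂ν := by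
    intro r hr
    have e1 : (∫ rt in Ioi r, kappa r₀ r rt * (β rt * ψ rt))
        = ∫ rt in Ioi r, kappa r₀ r rt * g rt := by
      apply integral_congr_ae
      filter_upwards [ae_restrict_of_ae hgfull] with rt hrt
      by_cases h : r₀ < rt
      · rw [hrt h]
      · rw [hκ_zero_r₀ r rt h]; ring
    have e2 : ∫ rt in Ioi r, kappa r₀ r rt * g rt = ∫ rt, kappa r₀ r rt * g rt :=
      setIntegral_eq_integral_of_forall_compl_eq_zero fun rt hrt => by
        rw [hκ_zero_left r rt hrt]; ring
    have e3 : ∫ rt, kappa r₀ r rt * g rt ∂ν = ∫ rt, kappa r₀ r rt * g rt :=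
      setIntegral_eq_integral_of_forall_compl_eq_zero fun rt hrt => by
        rw [hκ_zero_r₀ r rt hrt]; ring
    rw [e1, e2, ← e3]
  -- conclusion 1
  have key1 : ∀ᵐ r ∂μ, (∫ rt, F r rt ∂ν)
      = r * η r * ∫ rt in Ioi r, kappa r₀ r rt * (β rt * ψ rt) := by
    filter_upwards [ae_restrict_mem measurableSet_Ioi] with r hr
    have h1 : ∫ rt, F r rt ∂ν = r * ηe r * ∫ rt, kappa r₀ r rt * g rt ∂ν := by
      simp only [hF_def]
      exact integral_const_mul _ _
    rw [h1, hinner r hr, hηe_eq r (mem_Ici.mpr (le_of_lt (mem_Ioi.mp hr)))]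
  have c1 : IntegrableOn
      (fun r => r * η r * ∫ rt in Ioi r, kappa r₀ r rt * (β rt * ψ rt)) (Ioi (0:ℝ)) :=
    hswap.integral_prod_left.congr key1
  -- conclusion 2
  have hA_ae : (fun rt => rt * ηe rt * g rt)
      =ᵐ[ν] fun rt => rt * η rt * (β rt * ψ rt) := by
    filter_upwards [ae_restrict_mem measurableSet_Ioi, hg_ae] with rt hrt hg'
    rw [hηe_eq rt (le_trans hr₀.le (le_of_lt hrt)), hg']
  have hA_g : Integrable (fun rt => rt * ηe rt * g rt) ν := by
    apply Integrable.mono (hintg.const_mul C)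
    · exact ((measurable_id.mul hηe_cont.measurable).mul hgm).aestronglyMeasurable
    · filter_upwards [ae_restrict_mem measurableSet_Ioi] with rt hrt
      have hrt0 : (0:ℝ) < rt := lt_trans hr₀ hrt
      rw [Real.norm_eq_abs, Real.norm_eq_abs, abs_mul, abs_mul]
      have h1 : |rt| * |ηe rt| * |g rt| ≤ rt * C * g rt := by
        rw [abs_of_nonneg hrt0.le, abs_of_nonneg (hg0 rt)]
        exact mul_le_mul_of_nonneg_right
          (mul_le_mul_of_nonneg_left (hηe_bdd rt) hrt0.le) (hg0 rt)
      calc |rt| * |ηe rt| * |g rt| ≤ rt * C * g rt := h1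
        _ = C * (rt * g rt) := by ring
        _ ≤ |C * (rt * g rt)| := le_abs_self _
  have c2 : IntegrableOn (fun rt => rt * η rt * (β rt * ψ rt)) (Ioi r₀) :=
    hA_g.congr hA_ae
  -- conclusion 3
  have hΨ_eq : ∀ rt : ℝ, 0 ≤ rt → (∫ r in (0:ℝ)..rt, r ^ 2 * η' r) = Ψe rt := by
    intro rt h0
    apply intervalIntegral.integral_congr
    intro x hx
    rw [uIcc_of_le h0] at hx
    show x ^ 2 * η' x = x ^ 2 * η'e x
    rw [hη'e_eq x hx.1]
  have hB_ae : (fun rt => (1 / rt) * Ψe rt * g rt)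
      =ᵐ[ν] fun rt => (1 / rt) * (∫ r in (0:ℝ)..rt, r ^ 2 * η' r) * (β rt * ψ rt) := by
    filter_upwards [ae_restrict_mem measurableSet_Ioi, hg_ae] with rt hrt hg'
    rw [hΨ_eq rt (le_trans hr₀.le (le_of_lt hrt)), hg']
  have hB_g : Integrable (fun rt => (1 / rt) * Ψe rt * g rt) ν := by
    apply Integrable.mono (hintg.const_mul (K / r₀ ^ 2))
    · exact (((measurable_const.div measurable_id).mul hΨe_cont.measurable).mul
        hgm).aestronglyMeasurable
    · filter_upwards [ae_restrict_mem measurableSet_Ioi] with rt hrt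
      have hrt0 : (0:ℝ) < rt := lt_trans hr₀ hrt
      rw [Real.norm_eq_abs, Real.norm_eq_abs, abs_mul, abs_mul]
      have h1 : |1 / rt| ≤ 1 / r₀ := by
        rw [abs_of_nonneg (by positivity)]
        exact one_div_le_one_div_of_le hr₀ (le_of_lt hrt)
      have h2 : |Ψe rt| ≤ K := hΨe_bdd rt hrt0.le
      have h3 : g rt ≤ rt * g rt / r₀ := by
        rw [le_div_iff₀ hr₀]
        calc g rt * r₀ = r₀ * g rt := mul_comm _ _
          _ ≤ rt * g rt := mul_le_mul_of_nonneg_right (le_of_lt hrt) (hg0 rt)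
      calc |1 / rt| * |Ψe rt| * |g rt| ≤ (1 / r₀) * K * g rt := by
            rw [abs_of_nonneg (hg0 rt)]
            exact mul_le_mul_of_nonneg_right
              (mul_le_mul h1 h2 (abs_nonneg _) (by positivity)) (hg0 rt)
        _ ≤ (1 / r₀) * K * (rt * g rt / r₀) := by
            apply mul_le_mul_of_nonneg_left h3 (by positivity)
        _ = K / r₀ ^ 2 * (rt * g rt) := by ring
        _ ≤ |K / r₀ ^ 2 * (rt * g rt)| := le_abs_self _
  have c3 : IntegrableOn
      (fun rt => (1 / rt) * (∫ r in (0:ℝ)..rt, r ^ 2 * η' r) * (β rt * ψ rt)) (Ioi r₀) :=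
    hB_g.congr hB_ae
  -- integration by parts
  have hIBP : ∀ rt : ℝ, 0 ≤ rt → 2 * Φ rt = rt ^ 2 * ηe rt - Ψe rt := by
    intro rt h0
    have hd : ∀ x ∈ Ioo (0:ℝ) rt, HasDerivWithinAt (fun r : ℝ => r ^ 2 * ηe r)
        (2 * x * ηe x + x ^ 2 * η'e x) (Ioi x) x := by
      intro x hx
      have hη : HasDerivAt ηe (η'e x) x := (hηed x hx.1.le).hasDerivAt (Ici_mem_nhds hx.1)
      have hpow : HasDerivAt (fun r : ℝ => r ^ 2) (2 * x) x := by
        simpa using hasDerivAt_pow 2 x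
      exact (hpow.mul hη).hasDerivWithinAt
    have hcont : ContinuousOn (fun r : ℝ => r ^ 2 * ηe r) (Icc 0 rt) :=
      ((continuous_pow 2).mul hηe_cont).continuousOn
    have hii1 : IntervalIntegrable (fun x => 2 * x * ηe x) volume 0 rt :=
      ((continuous_const.mul continuous_id).mul hηe_cont).intervalIntegrable 0 rt
    have hii2 : IntervalIntegrable (fun x => x ^ 2 * η'e x) volume 0 rt := hη'e_int 0 rt
    have hftc := intervalIntegral.integral_eq_sub_of_hasDeriv_right_of_le h0 hcont hd
      (hii1.add hii2)
    rw [intervalIntegral.integral_add hii1 hii2] at hftc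
    have h2 : ∫ x in (0:ℝ)..rt, 2 * x * ηe x = 2 * Φ rt := by
      have : Φ rt = ∫ x in (0:ℝ)..rt, x * ηe x := rfl
      rw [this, ← intervalIntegral.integral_const_mul]
      apply intervalIntegral.integral_congr
      intro x _
      show 2 * x * ηe x = 2 * (x * ηe x)
      ring
    rw [h2] at hftc
    have hΨ : Ψe rt = ∫ x in (0:ℝ)..rt, x ^ 2 * η'e x := rfl
    rw [hΨ]
    norm_num at hftc
    linarith [hftc]
  -- Fubini and assembly
  have hswap_eq : ∫ r, (∫ rt, F r rt ∂ν) ∂μ = ∫ rt, (∫ r, F r rt ∂μ) ∂ν :=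
    integral_integral_swap hswap
  have hν_point : ∀ᵐ rt ∂ν, (∫ r, F r rt ∂μ)
      = (1/2) * (rt * ηe rt * g rt) - (1/2) * ((1/rt) * Ψe rt * g rt) := by
    filter_upwards [ae_restrict_mem measurableSet_Ioi] with rt hrt
    have hrt0 : (0:ℝ) < rt := lt_trans hr₀ hrt
    rw [hval rt hrt]
    have h2 := hIBP rt hrt0.le
    have hΦval : Φ rt = (rt ^ 2 * ηe rt - Ψe rt) / 2 := by linarith
    rw [hΦval]
    field_simp
  have hν_val : ∫ rt, (∫ r, F r rt ∂μ) ∂ν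
      = (1/2) * (∫ rt, rt * ηe rt * g rt ∂ν)
        - (1/2) * ∫ rt, (1/rt) * Ψe rt * g rt ∂ν := by
    rw [integral_congr_ae hν_point,
      integral_sub (hA_g.const_mul (1/2)) (hB_g.const_mul (1/2)),
      integral_const_mul, integral_const_mul]
  refine ⟨c1, c2, c3, ?_⟩
  have hLHS : (∫ r in Ioi (0:ℝ), r * η r * ∫ rt in Ioi r, kappa r₀ r rt * (β rt * ψ rt))
      = ∫ r, (∫ rt, F r rt ∂ν) ∂μ := (integral_congr_ae key1).symm
  have hRHS_A : ∫ rt, rt * ηe rt * g rt ∂ν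
      = ∫ rt in Ioi r₀, rt * η rt * (β rt * ψ rt) := integral_congr_ae hA_ae
  have hRHS_B : ∫ rt, (1/rt) * Ψe rt * g rt ∂ν
      = ∫ rt in Ioi r₀, (1/rt) * (∫ r in (0:ℝ)..rt, r ^ 2 * η' r) * (β rt * ψ rt) :=
    integral_congr_ae hB_ae
  calc 2 * ∫ r in Ioi (0:ℝ), r * η r * ∫ rt in Ioi r, kappa r₀ r rt * (β rt * ψ rt)
      = 2 * ∫ rt, (∫ r, F r rt ∂μ) ∂ν := by rw [hLHS, hswap_eq]
    _ = (∫ rt, rt * ηe rt * g rt ∂ν) - ∫ rt, (1/rt) * Ψe rt * g rt ∂ν := by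
        rw [hν_val]; ring
    _ = (∫ rt in Ioi r₀, rt * η rt * (β rt * ψ rt))
        - ∫ rt in Ioi r₀, (1/rt) * (∫ r in (0:ℝ)..rt, r ^ 2 * η' r) * (β rt * ψ rt) := by
        rw [hRHS_A, hRHS_B]
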